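/- Let λ > 0, γ > 0, and ρ ≥ 0, and let Y be a random variable distributed according to Texp(λ). Then Pr[ρ ≤ Y ≤ ρ + 2γ] ≤ (1 − e^{-2γλ}) · (Pr[Y ≥ ρ] + 1/(e^{λ} − 1)). -/

import Mathlib

open MeasureTheory

namespace Pad

variable {V : Type*}

/-- The weight of a walk: the sum of the weights of its edges. -/
def walkWeight (w : Sym2 V → ℝ) {G : SimpleGraph V} {u v : V} (p : G.Walk u v) : ℝ :=
  (p.darts.map fun d => w d.edge).sum

/-- Shortest-path distance in the weighted graph `(G, w)`. -/
noncomputable def wdist (w : Sym2 V → ℝ) (G : SimpleGraph V) (u v : V) : ℝ :=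
  sInf {x | ∃ p : G.Walk u v, x = walkWeight w p}

/-- Distance from a vertex to a set of vertices. -/
noncomputable def wdistSet (w : Sym2 V → ℝ) (G : SimpleGraph V) (v : V) (A : Set V) : ℝ :=
  sInf {x | ∃ a ∈ A, x = wdist w G v a}

/-- The closed ball of radius `r` around `v`. -/
def ball (w : Sym2 V → ℝ) (G : SimpleGraph V) (v : V) (r : ℝ) : Set V :=
  {u | wdist w G v u ≤ r}

/-- Weight of a walk of an induced subgraph, measured with the weights of `G`. -/
def walkWeightI (w : Sym2 V → ℝ) {G : SimpleGraph V} {C : Set V} {u v : C}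
    (p : (G.induce C).Walk u v) : ℝ :=
  (p.darts.map fun d => w (Sym2.map Subtype.val d.edge)).sum

/-- The cluster `C` has strong diameter at most `Δ`: every two vertices of `C` are joined,
inside the induced subgraph `G[C]`, by a walk of weight at most `Δ`. -/
def StronglyBounded (w : Sym2 V → ℝ) (G : SimpleGraph V) (C : Set V) (Δ : ℝ) : Prop :=
  ∀ u v : C, ∃ p : (G.induce C).Walk u v, walkWeightI w p ≤ Δ

/-- A partition of `V`, given by the map `cl` sending a vertex to its cluster. -/
structure Partition (V : Type*) where
  cl : V → Set V
  mem_cl : ∀ v, v ∈ cl v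
  cl_eq : ∀ u v, u ∈ cl v → cl u = cl v

/-- A partition is strongly `Δ`-bounded if each of its clusters has strong diameter at most `Δ`. -/
def Partition.StronglyBounded (w : Sym2 V → ℝ) (G : SimpleGraph V) (P : Partition V)
    (Δ : ℝ) : Prop :=
  ∀ v : V, Pad.StronglyBounded w G (P.cl v) Δ

/-- `(G, w)` has doubling dimension `ddim`: every ball of radius `2r` can be covered by
`2 ^ ddim` balls of radius `r`. -/
def Doubling (w : Sym2 V → ℝ) (G : SimpleGraph V) (ddim : ℝ) : Prop :=
  ∀ (x : V) (r : ℝ), 0 < r → ∃ T : Set V, T.Finite ∧ ((T.ncard : ℝ) ≤ (2 : ℝ) ^ ddim) ∧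
    ball w G x (2 * r) ⊆ ⋃ y ∈ T, ball w G y r

/-- `G` has the complete graph `K_r` as a minor: there are `r` pairwise disjoint connected
branch sets with an edge of `G` between any two of them. -/
def HasCliqueMinor (G : SimpleGraph V) (r : ℕ) : Prop :=
  ∃ B : Fin r → Set V,
    (∀ i, (G.induce (B i)).Connected) ∧
    (Pairwise fun i j => Disjoint (B i) (B j)) ∧
    ∀ i j : Fin r, i ≠ j → ∃ u ∈ B i, ∃ v ∈ B j, G.Adj u v

/-- A shortest path: a path whose weight equals the distance between its endpoints. -/
def IsShortestPath (w : Sym2 V → ℝ) (G : SimpleGraph V) {u v : V} (p : G.Walk u v) : Prop :=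
  p.IsPath ∧ walkWeight w p = wdist w G u v

/-- `G` has an `r`-core with radius `Δ`: there are at most `r` shortest paths such that every
vertex is within distance `Δ` of their union. -/
def HasCore (w : Sym2 V → ℝ) (G : SimpleGraph V) (r : ℕ) (Δ : ℝ) : Prop :=
  ∃ r' : ℕ, r' ≤ r ∧ ∃ (a b : Fin r' → V) (p : ∀ i, G.Walk (a i) (b i)),
    (∀ i, IsShortestPath w G (p i)) ∧
    ∀ v : V, ∃ i, ∃ u ∈ (p i).support, wdist w G v u ≤ Δ

end Pad
namespace Pad

/-- The `[0,1]`-truncated exponential distribution with parameter `l`: the measure on `ℝ`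
with density `y ↦ l·e^{-l·y}/(1 - e^{-l})` on `[0,1]` (and `0` elsewhere). -/
noncomputable def texp (l : ℝ) : MeasureTheory.Measure ℝ :=
  MeasureTheory.volume.withDensity fun y =>
    ENNReal.ofReal
      (if y ∈ Set.Icc (0 : ℝ) 1 then l * Real.exp (-(l * y)) / (1 - Real.exp (-l)) else 0)

end Pad

lemma aux_int (l a b : ℝ) :
    ∫ y in a..b, l * Real.exp (-(l * y)) = Real.exp (-(l * a)) - Real.exp (-(l * b)) := by
  have h : ∀ y ∈ Set.uIcc a b,
      HasDerivAt (fun x => -Real.exp (-(l * x))) (l * Real.exp (-(l * y))) y := by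
    intro y _
    have h1 : HasDerivAt (fun x : ℝ => -(l * x)) (-l) y := by
      simpa using ((hasDerivAt_id y).const_mul l).fun_neg
    have h2 := (Real.hasDerivAt_exp (-(l * y))).comp y h1
    have := h2.fun_neg
    refine this.congr_deriv ?_
    ring
  have hint : IntervalIntegrable (fun y => l * Real.exp (-(l * y))) volume a b :=
    (Continuous.intervalIntegrable (by continuity) a b)
  rw [intervalIntegral.integral_eq_sub_of_hasDerivAt h hint]
  ring

lemma aux_lint (l c a b : ℝ) (hl : 0 < l) (hc : 0 < c) (hab : a ≤ b) :
    ∫⁻ y in Set.Icc a b, ENNReal.ofReal (l * Real.exp (-(l * y)) / c) =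
      ENNReal.ofReal ((Real.exp (-(l * a)) - Real.exp (-(l * b))) / c) := by
  have hnn : ∀ y, 0 ≤ l * Real.exp (-(l * y)) / c := fun y =>
    div_nonneg (mul_nonneg hl.le (Real.exp_nonneg _)) hc.le
  have hint : IntegrableOn (fun y => l * Real.exp (-(l * y)) / c) (Set.Icc a b) volume :=
    (Continuous.integrableOn_Icc (by continuity))
  rw [← MeasureTheory.ofReal_integral_eq_lintegral_ofReal hint
      (Filter.Eventually.of_forall fun y => hnn y)]
  congr 1
  rw [MeasureTheory.integral_Icc_eq_integral_Ioc, ← intervalIntegral.integral_of_le hab]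
  have : ∫ y in a..b, l * Real.exp (-(l * y)) / c
      = (∫ y in a..b, l * Real.exp (-(l * y))) / c := by
    simp [intervalIntegral.integral_div]
  rw [this, aux_int]


/-- For `Y ∼ Texp(l)`, `λ > 0`, `γ > 0` and `ρ ≥ 0`,
`Pr[ρ ≤ Y ≤ ρ + 2γ] ≤ (1 - e^{-2γl}) · (Pr[Y ≥ ρ] + 1/(e^l - 1))`. -/
theorem texp_interval_prob_le
    (l γ ρ : ℝ) (hl : 0 < l) (hγ : 0 < γ) (hρ : 0 ≤ ρ)
    (Ω : Type) [MeasurableSpace Ω] (μ : MeasureTheory.Measure Ω)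
    [MeasureTheory.IsProbabilityMeasure μ]
    (Y : Ω → ℝ) (hY : Measurable Y) (hlaw : μ.map Y = Pad.texp l) :
    μ {ω | ρ ≤ Y ω ∧ Y ω ≤ ρ + 2 * γ} ≤
      ENNReal.ofReal (1 - Real.exp (-(2 * γ * l))) *
        (μ {ω | ρ ≤ Y ω} + ENNReal.ofReal (1 / (Real.exp l - 1))) := by
  have hc : 0 < 1 - Real.exp (-l) := by
    have : Real.exp (-l) < 1 := by
      rw [Real.exp_lt_one_iff]; linarith
    linarith
  set c := 1 - Real.exp (-l) with hcdef
  have hIcc : μ {ω | ρ ≤ Y ω ∧ Y ω ≤ ρ + 2 * γ} = Pad.texp l (Set.Icc ρ (ρ + 2 * γ)) := by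
    rw [← hlaw, Measure.map_apply hY measurableSet_Icc]; rfl
  have hIci : μ {ω | ρ ≤ Y ω} = Pad.texp l (Set.Ici ρ) := by
    rw [← hlaw, Measure.map_apply hY measurableSet_Ici]; rfl
  rw [hIcc, hIci]
  by_cases hρ1 : ρ ≤ 1
  · -- main case
    have hub : Pad.texp l (Set.Icc ρ (ρ + 2 * γ)) ≤
        ENNReal.ofReal ((Real.exp (-(l * ρ)) - Real.exp (-(l * (ρ + 2 * γ)))) / c) := by
      rw [Pad.texp, MeasureTheory.withDensity_apply _ measurableSet_Icc]
      calc ∫⁻ y in Set.Icc ρ (ρ + 2 * γ), ENNReal.ofReal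
            (if y ∈ Set.Icc (0 : ℝ) 1 then l * Real.exp (-(l * y)) / c else 0)
          ≤ ∫⁻ y in Set.Icc ρ (ρ + 2 * γ), ENNReal.ofReal (l * Real.exp (-(l * y)) / c) := by
            apply lintegral_mono
            intro y
            dsimp only
            split_ifs with h
            · exact le_rfl
            · simp
        _ = ENNReal.ofReal ((Real.exp (-(l * ρ)) - Real.exp (-(l * (ρ + 2 * γ)))) / c) :=
            aux_lint l c ρ (ρ + 2 * γ) hl hc (by linarith)
    have hlb : ENNReal.ofReal ((Real.exp (-(l * ρ)) - Real.exp (-l)) / c) ≤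
        Pad.texp l (Set.Ici ρ) := by
      have hsub : Set.Icc ρ 1 ⊆ Set.Ici ρ := fun y hy => hy.1
      have h1 : Pad.texp l (Set.Icc ρ 1) =
          ENNReal.ofReal ((Real.exp (-(l * ρ)) - Real.exp (-l)) / c) := by
        rw [Pad.texp, MeasureTheory.withDensity_apply _ measurableSet_Icc]
        have heq : ∫⁻ y in Set.Icc ρ 1, ENNReal.ofReal
            (if y ∈ Set.Icc (0 : ℝ) 1 then l * Real.exp (-(l * y)) / c else 0)
            = ∫⁻ y in Set.Icc ρ 1, ENNReal.ofReal (l * Real.exp (-(l * y)) / c) := by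
          apply setLIntegral_congr_fun measurableSet_Icc
          intro y hy
          dsimp only
          rw [if_pos ⟨le_trans hρ hy.1, hy.2⟩]
        rw [heq, aux_lint l c ρ 1 hl hc hρ1]
        norm_num
      rw [← h1]
      exact measure_mono hsub
    refine le_trans hub (le_trans ?_ (mul_le_mul_right (add_le_add_left hlb _) _))
    -- now pure ofReal arithmetic
    have hg2 : (0:ℝ) ≤ 1 - Real.exp (-(2 * γ * l)) := by
      have : Real.exp (-(2 * γ * l)) ≤ 1 := by
        rw [Real.exp_le_one_iff]; nlinarith
      linarith
    have hnn1 : (0:ℝ) ≤ (Real.exp (-(l * ρ)) - Real.exp (-l)) / c := by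
      apply div_nonneg _ hc.le
      have : Real.exp (-l) ≤ Real.exp (-(l * ρ)) := by
        apply Real.exp_le_exp.mpr; nlinarith
      linarith
    rw [← ENNReal.ofReal_add hnn1 (by
      have h3 : (1:ℝ) < Real.exp l := by rw [← Real.exp_zero]; exact Real.exp_lt_exp.mpr hl
      exact div_nonneg zero_le_one (by linarith)), ← ENNReal.ofReal_mul hg2]
    apply ENNReal.ofReal_le_ofReal
    have h2 : 1 / (Real.exp l - 1) = Real.exp (-l) / c := by
      rw [hcdef, Real.exp_neg]
      have h3 : (1:ℝ) < Real.exp l := by rw [← Real.exp_zero]; exact Real.exp_lt_exp.mpr hl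
      field_simp
    have h4 : Real.exp (-(l * (ρ + 2 * γ))) = Real.exp (-(l * ρ)) * Real.exp (-(2 * γ * l)) := by
      rw [← Real.exp_add]; ring_nf
    rw [h2, h4]
    apply le_of_eq
    field_simp
    ring
  · -- ρ > 1 : left side is zero
    have : Pad.texp l (Set.Icc ρ (ρ + 2 * γ)) = 0 := by
      rw [Pad.texp, MeasureTheory.withDensity_apply _ measurableSet_Icc]
      have heq : ∫⁻ y in Set.Icc ρ (ρ + 2 * γ), ENNReal.ofReal
          (if y ∈ Set.Icc (0 : ℝ) 1 then l * Real.exp (-(l * y)) / c else 0)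
          = ∫⁻ _ in Set.Icc ρ (ρ + 2 * γ), 0 := by
        apply setLIntegral_congr_fun measurableSet_Icc
        intro y hy
        dsimp only
        rw [if_neg (fun h => hρ1 (le_trans hy.1 h.2))]
        simp
      rw [heq]
      simp
    rw [this]
    exact zero_le
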